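/- Let F/E be a finite Galois extension of fields with abelian Galois group Γ, and let y ∈ F be a normal basis generator of F over E. Define R(y) = Σ_{g∈Γ} Tr_{F/E}(y·g(y))·g ∈ E[Γ]. Then R(y) is a unit of E[Γ]. (In particular, for an extension of finite fields F_{q^n}/F_q with Galois group G̃, if y generates a normal basis then R(y) ∈ F_q[G̃]^×.) -/

import Mathlib

/-- Let `F/E` be a finite Galois extension with abelian Galois group `Γ`
and `y` a normal basis generator of `F/E`. Then
`R(y) = Σ_{g∈Γ} Tr_{F/E}(y·g(y))·g` is a unit of the group algebra `E[Γ]`. -/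
theorem stmt_4 (E F : Type*) [Field E] [Field F] [Algebra E F]
    [FiniteDimensional E F] [IsGalois E F]
    (hab : ∀ σ τ : F ≃ₐ[E] F, σ * τ = τ * σ)
    (y : F) (b : Module.Basis (F ≃ₐ[E] F) E F) (hb : ∀ g : F ≃ₐ[E] F, b g = g y) :
    IsUnit (∑ g : F ≃ₐ[E] F,
      MonoidAlgebra.single g (Algebra.trace E F (y * g y)) :
        MonoidAlgebra E (F ≃ₐ[E] F)) := by
  classical
  letI : CommGroup (F ≃ₐ[E] F) := { (inferInstance : Group (F ≃ₐ[E] F)) with mul_comm := hab }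
  set R : MonoidAlgebra E (F ≃ₐ[E] F) :=
    ∑ g : F ≃ₐ[E] F, MonoidAlgebra.single g (Algebra.trace E F (y * g y)) with hRdef
  have htr : ∀ (σ : F ≃ₐ[E] F) (x : F), Algebra.trace E F (σ x) = Algebra.trace E F x := by
    intro σ x
    apply FaithfulSMul.algebraMap_injective E F
    rw [trace_eq_sum_automorphisms, trace_eq_sum_automorphisms]
    exact Fintype.sum_equiv (Equiv.mulRight σ) _ _ (fun τ => rfl)
  have hR : ∀ g : F ≃ₐ[E] F, R.coeff g = Algebra.trace E F (y * g y) := by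
    intro g
    rw [hRdef, MonoidAlgebra.coeff_sum, Finset.sum_apply']
    simp [Finsupp.single_apply]
  have hinj : Function.Injective (LinearMap.mulLeft E R) := by
    rw [injective_iff_map_eq_zero]
    intro x hx
    simp only [LinearMap.mulLeft_apply] at hx
    set w : F := ∑ h : F ≃ₐ[E] F, x.coeff h • (h⁻¹ y) with hwdef
    have hcoef : ∀ g : F ≃ₐ[E] F, (R * x).coeff g = Algebra.trace E F (g⁻¹ y * w) := by
      intro g
      rw [MonoidAlgebra.coeff_mul_apply_right, Finsupp.sum_fintype _ _ (by simp)]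
      rw [hwdef, Finset.mul_sum, map_sum]
      refine Finset.sum_congr rfl fun h _ => ?_
      have h1 : g⁻¹ y * x.coeff h • h⁻¹ y = x.coeff h • g⁻¹ (y * (g * h⁻¹) y) := by
        rw [map_mul, mul_smul_comm]
        congr 2
        rw [← AlgEquiv.mul_apply, inv_mul_cancel_left]
      rw [hR, h1, map_smul, htr, smul_eq_mul]
      exact mul_comm _ _
    have h0 : ∀ g : F ≃ₐ[E] F, Algebra.trace E F (g⁻¹ y * w) = 0 := by
      intro g
      rw [← hcoef g, hx]
      rfl
    have h1 : ∀ z : F, Algebra.trace E F (z * w) = 0 := by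
      intro z
      have hz : z = ∑ g : F ≃ₐ[E] F, b.repr z g • (g y) := by
        conv_lhs => rw [← b.sum_repr z]
        exact Finset.sum_congr rfl fun g _ => by rw [hb]
      rw [hz, Finset.sum_mul, map_sum]
      refine Finset.sum_eq_zero fun g _ => ?_
      rw [smul_mul_assoc, map_smul]
      have := h0 g⁻¹
      rw [inv_inv] at this
      rw [this, smul_zero]
    have hw0 : w = 0 := by
      apply (traceForm_nondegenerate E F).1
      intro n
      rw [Algebra.traceForm_apply, mul_comm]
      exact h1 n
    ext g
    have h2 : b.repr w g⁻¹ = 0 := by rw [hw0, map_zero]; rfl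
    rw [hwdef, map_sum] at h2
    simp only [map_smul, ← hb, b.repr_self, Finsupp.smul_single, smul_eq_mul, mul_one] at h2
    rw [Finset.sum_apply'] at h2
    simp only [Finsupp.single_apply, inv_inj] at h2
    rw [Finset.sum_ite_eq' Finset.univ g (fun h => x.coeff h)] at h2
    simpa using h2
  haveI : FiniteDimensional E (MonoidAlgebra E (F ≃ₐ[E] F)) :=
    Module.Finite.of_basis (MonoidAlgebra.basis (F ≃ₐ[E] F) E :
      Module.Basis (F ≃ₐ[E] F) E (MonoidAlgebra E (F ≃ₐ[E] F)))
  have hsurj := (LinearMap.injective_iff_surjective).mp hinj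
  obtain ⟨z, hz⟩ := hsurj (1 : MonoidAlgebra E (F ≃ₐ[E] F))
  simp only [LinearMap.mulLeft_apply] at hz
  exact IsUnit.of_mul_eq_one z hz
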